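/- Let N_A, N_B ≥ 1, let ψ_1, …, ψ_Q ∈ ℂ^{Fin N_A × Fin N_B} be an orthonormal family of vectors (so Q ≤ N_A·N_B), let ρ = (1/Q) ∑_{i=1}^{Q} ψ_i ψ_i†, and let Ψ_ref ∈ ℂ^{N_A} be a unit vector. Then the greatest value of Re⟨Ψ_ref, Tr_B(U ρ U†) Ψ_ref⟩ over unitary matrices U indexed by Fin N_A × Fin N_B equals N_B/Q if Q ≥ N_B, and equals 1 if Q ≤ N_B. -/

import Mathlib

open Matrix

/-- The partial trace over the second tensor factor `B`:
`(Tr_B M)_{a,a'} = ∑_b M_{(a,b),(a',b)}`. -/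
noncomputable def traceB {NA NB : ℕ} (M : Matrix (Fin NA × Fin NB) (Fin NA × Fin NB) ℂ) :
    Matrix (Fin NA) (Fin NA) ℂ :=
  fun a a' => ∑ b : Fin NB, M (a, b) (a', b)

noncomputable def toE {n : Type} [Fintype n] (x : n → ℂ) : EuclideanSpace ℂ n := WithLp.toLp 2 x

lemma inner_toE {n : Type} [Fintype n] (x y : n → ℂ) :
    (inner (𝕜 := ℂ) (toE x) (toE y)) = star x ⬝ᵥ y := by
  simp [PiLp.inner_apply, dotProduct, RCLike.inner_apply, mul_comm, toE]

lemma star_dot_comm {n : Type} [Fintype n] (x y : n → ℂ) :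
    star x ⬝ᵥ y = starRingEnd ℂ (star y ⬝ᵥ x) := by
  simp [dotProduct, map_sum, mul_comm]

lemma exists_onb {n : Type} [Fintype n] [DecidableEq n] {m : ℕ}
    (e : Fin m ↪ n) (γ : Fin m → (n → ℂ))
    (hγ : ∀ k l, star (γ k) ⬝ᵥ γ l = if k = l then 1 else 0) :
    ∃ b : OrthonormalBasis n ℂ (EuclideanSpace ℂ n), ∀ k, b (e k) = toE (γ k) := by
  set v : n → EuclideanSpace ℂ n := Function.extend e (toE ∘ γ) 0 with hv
  have hre : ∀ k, v (e k) = toE (γ k) := fun k => e.injective.extend_apply _ _ _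
  have horth : Orthonormal ℂ ((Set.range e).restrict v) := by
    have h1 : Orthonormal ℂ (toE ∘ γ) := by
      rw [orthonormal_iff_ite]
      intro k l
      simpa [inner_toE] using hγ k l
    have h2 : (Set.range e).restrict v =
        (toE ∘ γ) ∘ (Equiv.ofInjective e e.injective).symm := by
      funext x
      have : e ((Equiv.ofInjective e e.injective).symm x) = x.val :=
        Equiv.apply_ofInjective_symm e.injective x
      show v x.val = _
      rw [← this, hre]
      rfl
    rw [h2]
    exact h1.comp _ (Equiv.injective _)
  obtain ⟨b, hb⟩ := horth.exists_orthonormalBasis_extension_of_card_eq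
    (by simp [finrank_euclideanSpace])
  exact ⟨b, fun k => by rw [hb (e k) (Set.mem_range_self k), hre]⟩

lemma exists_unitary_map {n : Type} [Fintype n] [DecidableEq n] {m : ℕ}
    (hm : m ≤ Fintype.card n) (α β : Fin m → (n → ℂ))
    (hα : ∀ k l, star (α k) ⬝ᵥ α l = if k = l then 1 else 0)
    (hβ : ∀ k l, star (β k) ⬝ᵥ β l = if k = l then 1 else 0) :
    ∃ U : Matrix n n ℂ, U * Uᴴ = 1 ∧ Uᴴ * U = 1 ∧ ∀ k, U *ᵥ α k = β k := by
  obtain ⟨e⟩ : Nonempty (Fin m ↪ n) :=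
    Function.Embedding.nonempty_of_card_le (by simpa using hm)
  obtain ⟨bα, hbα⟩ := exists_onb e α hα
  obtain ⟨bβ, hbβ⟩ := exists_onb e β hβ
  set Mα : Matrix n n ℂ := fun p j => bα j p with hMα
  set Mβ : Matrix n n ℂ := fun p j => bβ j p with hMβ
  have key : ∀ (b : OrthonormalBasis n ℂ (EuclideanSpace ℂ n)) (M : Matrix n n ℂ),
      M = (fun p j => b j p) → Mᴴ * M = 1 := by
    intro b M hM
    ext j k
    have := (orthonormal_iff_ite.mp b.orthonormal) j k
    rw [show (inner ℂ (b j) (b k) : ℂ) = inner ℂ (toE (fun p => b j p)) (toE (fun p => b k p)) from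
      rfl, inner_toE] at this
    simp only [Matrix.mul_apply, conjTranspose_apply, Matrix.one_apply]
    rw [hM]
    simpa [dotProduct] using this
  have hαu : Mαᴴ * Mα = 1 := key bα Mα rfl
  have hβu : Mβᴴ * Mβ = 1 := key bβ Mβ rfl
  have hαu' : Mα * Mαᴴ = 1 := mul_eq_one_comm.mp hαu
  have hβu' : Mβ * Mβᴴ = 1 := mul_eq_one_comm.mp hβu
  refine ⟨Mβ * Mαᴴ, ?_, ?_, ?_⟩
  · rw [conjTranspose_mul, conjTranspose_conjTranspose, Matrix.mul_assoc,
      ← Matrix.mul_assoc Mαᴴ, hαu, Matrix.one_mul, hβu']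
  · rw [conjTranspose_mul, conjTranspose_conjTranspose, Matrix.mul_assoc,
      ← Matrix.mul_assoc Mβᴴ, hβu, Matrix.one_mul, hαu']
  · intro k
    have h1 : Mαᴴ *ᵥ α k = Pi.single (e k) 1 := by
      ext j
      have := (orthonormal_iff_ite.mp bα.orthonormal) j (e k)
      rw [show (inner ℂ (bα j) (bα (e k)) : ℂ)
          = inner ℂ (toE (fun p => bα j p)) (toE (α k)) from by rw [hbα]; rfl,
        inner_toE] at this
      simp only [mulVec, conjTranspose_apply, Pi.single_apply]
      rw [hMα]
      simpa [dotProduct] using this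
    rw [← mulVec_mulVec, h1]
    ext p
    have : bβ (e k) p = β k p := by rw [hbβ]; rfl
    simp [mulVec_single]
    rw [hMβ]
    exact this

lemma sum_mulVec' {n : Type} [Fintype n] {k : ℕ} (A : Fin k → Matrix n n ℂ) (w : n → ℂ) :
    (∑ i, A i) *ᵥ w = ∑ i, A i *ᵥ w := by
  ext p
  simp only [mulVec, dotProduct, Finset.sum_apply, Matrix.sum_apply, Finset.sum_mul]
  exact Finset.sum_comm

lemma dot_sum' {n : Type} [Fintype n] {k : ℕ} (v : Fin k → (n → ℂ)) (w : n → ℂ) :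
    star w ⬝ᵥ (∑ i, v i) = ∑ i, star w ⬝ᵥ v i := by
  simp only [dotProduct, Finset.sum_apply, Finset.mul_sum]
  exact Finset.sum_comm

lemma vecMulVec_mulVec' {n : Type} [Fintype n] (x y w : n → ℂ) :
    vecMulVec x y *ᵥ w = fun p => x p * (y ⬝ᵥ w) := by
  ext p; simp [mulVec, vecMulVec_apply, dotProduct, Finset.mul_sum, mul_assoc]

/-- Step 1: the partial-trace expectation value as a sum over the `χ_b = Ψref ⊗ e_b`. -/
lemma step1 {NA NB : ℕ} (Ψref : Fin NA → ℂ)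
    (M : Matrix (Fin NA × Fin NB) (Fin NA × Fin NB) ℂ) :
    star Ψref ⬝ᵥ traceB M *ᵥ Ψref
      = ∑ b : Fin NB, (star (fun p : Fin NA × Fin NB => if p.2 = b then Ψref p.1 else 0)
          ⬝ᵥ M *ᵥ (fun p : Fin NA × Fin NB => if p.2 = b then Ψref p.1 else 0)) := by
  simp only [dotProduct, mulVec, traceB, Pi.star_apply, Fintype.sum_prod_type, apply_ite star,
    star_zero, ite_mul, zero_mul, mul_ite, mul_zero, Finset.sum_ite_eq', Finset.mem_univ, if_true,
    Finset.mul_sum, Finset.sum_mul, Finset.sum_ite_irrel, Finset.sum_const_zero]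
  exact Eq.trans (Finset.sum_congr rfl fun a _ => Finset.sum_comm) Finset.sum_comm

/-- Step 2: conjugating by a matrix moves `U` onto the vectors. -/
lemma step2 {n : Type} [Fintype n] (U ρ : Matrix n n ℂ) (χ : n → ℂ) :
    star χ ⬝ᵥ (U * ρ * Uᴴ) *ᵥ χ = star (Uᴴ *ᵥ χ) ⬝ᵥ ρ *ᵥ (Uᴴ *ᵥ χ) := by
  rw [star_mulVec, conjTranspose_conjTranspose, ← mulVec_mulVec, ← mulVec_mulVec,
    dotProduct_mulVec]

/-- Step 3: expectation of `ρ` in a vector `w`. -/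
lemma step3 {n : Type} [Fintype n] (Q : ℕ) {k : ℕ} (ψ : Fin k → (n → ℂ)) (w : n → ℂ) :
    star w ⬝ᵥ ((1 / (Q : ℂ)) • ∑ i, vecMulVec (ψ i) (star (ψ i))) *ᵥ w
      = (1 / (Q : ℂ)) * ∑ i, (Complex.normSq (star w ⬝ᵥ ψ i) : ℂ) := by
  rw [smul_mulVec, dotProduct_smul, smul_eq_mul]
  congr 1
  rw [sum_mulVec', dot_sum']
  refine Finset.sum_congr rfl fun i _ => ?_
  rw [vecMulVec_mulVec']
  have h1 : star w ⬝ᵥ (fun p => ψ i p * (star (ψ i) ⬝ᵥ w))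
      = (star w ⬝ᵥ ψ i) * (star (ψ i) ⬝ᵥ w) := by
    simp [dotProduct, Finset.sum_mul, mul_assoc]
  rw [h1, star_dot_comm (ψ i) w, Complex.mul_conj]

/-- The main value formula. -/
lemma value_formula {NA NB Q : ℕ} (ψ : Fin Q → (Fin NA × Fin NB → ℂ)) (Ψref : Fin NA → ℂ)
    (U ρ : Matrix (Fin NA × Fin NB) (Fin NA × Fin NB) ℂ)
    (hρ : ρ = (1 / (Q : ℂ)) • ∑ i, vecMulVec (ψ i) (star (ψ i))) :
    (star Ψref ⬝ᵥ traceB (U * ρ * Uᴴ) *ᵥ Ψref).re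
      = (1 / (Q : ℝ)) * ∑ b : Fin NB, ∑ i, Complex.normSq
          (star (Uᴴ *ᵥ fun p : Fin NA × Fin NB => if p.2 = b then Ψref p.1 else 0) ⬝ᵥ ψ i) := by
  rw [step1]
  have : ∀ b : Fin NB,
      star (fun p : Fin NA × Fin NB => if p.2 = b then Ψref p.1 else 0)
        ⬝ᵥ (U * ρ * Uᴴ) *ᵥ (fun p : Fin NA × Fin NB => if p.2 = b then Ψref p.1 else 0)
      = (1 / (Q : ℂ)) * ∑ i, (Complex.normSq
          (star (Uᴴ *ᵥ fun p : Fin NA × Fin NB => if p.2 = b then Ψref p.1 else 0) ⬝ᵥ ψ i) : ℂ) := by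
    intro b
    rw [step2, hρ, step3]
  rw [Finset.sum_congr rfl fun b _ => this b, ← Finset.mul_sum]
  simp

/-- Unitary invariance of the hermitian dot product. -/
lemma unitary_dot {n : Type} [Fintype n] [DecidableEq n] (U : Matrix n n ℂ)
    (hU : U * Uᴴ = 1) (x y : n → ℂ) :
    star (Uᴴ *ᵥ x) ⬝ᵥ (Uᴴ *ᵥ y) = star x ⬝ᵥ y := by
  rw [star_mulVec, conjTranspose_conjTranspose, ← dotProduct_mulVec, mulVec_mulVec, hU,
    one_mulVec]

/-- Moving `Uᴴ` to the other side of the dot product. -/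
lemma adj_dot {n : Type} [Fintype n] (U : Matrix n n ℂ) (x y : n → ℂ) :
    star (Uᴴ *ᵥ x) ⬝ᵥ y = star x ⬝ᵥ (U *ᵥ y) := by
  rw [star_mulVec, conjTranspose_conjTranspose, ← dotProduct_mulVec]

/-- Bessel's inequality in dot-product language. -/
lemma bessel {n : Type} [Fintype n] {k : ℕ} (v : Fin k → (n → ℂ))
    (hv : ∀ i j, star (v i) ⬝ᵥ v j = if i = j then 1 else 0)
    (x : n → ℂ) (hx : star x ⬝ᵥ x = 1) :
    ∑ i, Complex.normSq (star (v i) ⬝ᵥ x) ≤ 1 := by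
  have hv' : Orthonormal ℂ (toE ∘ v) := by
    rw [orthonormal_iff_ite]
    intro i j
    simpa [inner_toE] using hv i j
  have hb := hv'.sum_inner_products_le (s := Finset.univ) (toE x)
  have hnorm : ‖toE x‖ ^ 2 = 1 := by
    rw [← inner_self_eq_norm_sq (𝕜 := ℂ), inner_toE, hx]
    simp
  rw [hnorm] at hb
  refine le_trans (le_of_eq ?_) hb
  refine Finset.sum_congr rfl fun i _ => ?_
  rw [show (inner ℂ ((toE ∘ v) i) (toE x) : ℂ) = star (v i) ⬝ᵥ x from by
    rw [Function.comp_apply, inner_toE]]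
  rw [← Complex.sq_norm]

lemma normSq_dot_comm {n : Type} [Fintype n] (x y : n → ℂ) :
    Complex.normSq (star x ⬝ᵥ y) = Complex.normSq (star y ⬝ᵥ x) := by
  rw [star_dot_comm]; exact Complex.normSq_conj _

lemma chi_orth {NA NB : ℕ} (Ψref : Fin NA → ℂ) (href : star Ψref ⬝ᵥ Ψref = 1) (b b' : Fin NB) :
    star (fun p : Fin NA × Fin NB => if p.2 = b then Ψref p.1 else 0)
      ⬝ᵥ (fun p : Fin NA × Fin NB => if p.2 = b' then Ψref p.1 else 0)
      = if b = b' then 1 else 0 := by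
  rcases eq_or_ne b b' with rfl | h
  · rw [if_pos rfl, ← href]
    simp [dotProduct, Fintype.sum_prod_type, apply_ite star, ite_mul, mul_ite,
      Finset.sum_ite_irrel, Finset.sum_const_zero, Finset.sum_ite_eq']
  · rw [if_neg h]
    apply Finset.sum_eq_zero
    rintro ⟨a, c⟩ -
    rcases eq_or_ne c b with rfl | hc
    · simp [h]
    · simp [hc]

/-- For an orthonormal family `ψ_1, …, ψ_Q` in `ℂ^{N_A} ⊗ ℂ^{N_B}`, the
mixed state `ρ = (1/Q) ∑_i ψ_i ψ_i†`, and a unit vector `Ψ_ref ∈ ℂ^{N_A}`, the greatest value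
of `Re⟨Ψ_ref, Tr_B (U ρ U†) Ψ_ref⟩` over unitaries `U` equals `N_B / Q` if `Q ≥ N_B`, and
equals `1` if `Q ≤ N_B`. -/
theorem max_compression_rate_orthonormal_inputs
    (NA NB Q : ℕ) (hNA : 1 ≤ NA) (hNB : 1 ≤ NB) (hQ : 1 ≤ Q)
    (ψ : Fin Q → (Fin NA × Fin NB → ℂ))
    (horth : ∀ i j, star (ψ i) ⬝ᵥ ψ j = if i = j then 1 else 0)
    (Ψref : Fin NA → ℂ) (href : star Ψref ⬝ᵥ Ψref = 1)
    (ρ : Matrix (Fin NA × Fin NB) (Fin NA × Fin NB) ℂ)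
    (hρ : ρ = (1 / (Q : ℂ)) • ∑ i, vecMulVec (ψ i) (star (ψ i))) :
    (NB ≤ Q →
      IsGreatest
        { x : ℝ | ∃ U : Matrix (Fin NA × Fin NB) (Fin NA × Fin NB) ℂ,
            U * Uᴴ = 1 ∧ Uᴴ * U = 1 ∧
            x = (star Ψref ⬝ᵥ (traceB (U * ρ * Uᴴ)) *ᵥ Ψref).re }
        ((NB : ℝ) / Q)) ∧
    (Q ≤ NB →
      IsGreatest
        { x : ℝ | ∃ U : Matrix (Fin NA × Fin NB) (Fin NA × Fin NB) ℂ,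
            U * Uᴴ = 1 ∧ Uᴴ * U = 1 ∧
            x = (star Ψref ⬝ᵥ (traceB (U * ρ * Uᴴ)) *ᵥ Ψref).re }
        1) := by
  have hQ0 : (0:ℝ) < (Q:ℝ) := by exact_mod_cast hQ
  set χ : Fin NB → (Fin NA × Fin NB → ℂ) :=
    fun b => fun p => if p.2 = b then Ψref p.1 else 0 with hχ
  have hχorth : ∀ b b', star (χ b) ⬝ᵥ χ b' = if b = b' then 1 else 0 :=
    fun b b' => chi_orth Ψref href b b'
  have hval : ∀ U : Matrix (Fin NA × Fin NB) (Fin NA × Fin NB) ℂ,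
      (star Ψref ⬝ᵥ traceB (U * ρ * Uᴴ) *ᵥ Ψref).re
        = (1 / (Q:ℝ)) * ∑ b : Fin NB, ∑ i, Complex.normSq (star (Uᴴ *ᵥ χ b) ⬝ᵥ ψ i) :=
    fun U => value_formula ψ Ψref U ρ hρ
  -- orthonormality of the  w_b = Uᴴ *ᵥ χ b
  have hworth : ∀ U : Matrix (Fin NA × Fin NB) (Fin NA × Fin NB) ℂ, U * Uᴴ = 1 →
      ∀ b b', star (Uᴴ *ᵥ χ b) ⬝ᵥ (Uᴴ *ᵥ χ b') = if b = b' then 1 else 0 := by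
    intro U hU b b'
    rw [unitary_dot U hU, hχorth]
  -- upper bound by NB/Q
  have hubNB : ∀ U : Matrix (Fin NA × Fin NB) (Fin NA × Fin NB) ℂ, U * Uᴴ = 1 →
      (1 / (Q:ℝ)) * ∑ b : Fin NB, ∑ i, Complex.normSq (star (Uᴴ *ᵥ χ b) ⬝ᵥ ψ i)
        ≤ (NB:ℝ) / Q := by
    intro U hU
    have hS : ∑ b : Fin NB, ∑ i, Complex.normSq (star (Uᴴ *ᵥ χ b) ⬝ᵥ ψ i) ≤ (NB:ℝ) := by
      calc ∑ b : Fin NB, ∑ i, Complex.normSq (star (Uᴴ *ᵥ χ b) ⬝ᵥ ψ i)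
          ≤ ∑ _b : Fin NB, (1:ℝ) := by
            refine Finset.sum_le_sum fun b _ => ?_
            have hwb : star (Uᴴ *ᵥ χ b) ⬝ᵥ (Uᴴ *ᵥ χ b) = 1 := by
              rw [hworth U hU b b]; simp
            have := bessel ψ horth (Uᴴ *ᵥ χ b) hwb
            refine le_trans (le_of_eq ?_) this
            exact Finset.sum_congr rfl fun i _ => normSq_dot_comm _ _
        _ = (NB:ℝ) := by simp
    calc (1 / (Q:ℝ)) * ∑ b : Fin NB, ∑ i, Complex.normSq (star (Uᴴ *ᵥ χ b) ⬝ᵥ ψ i)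
        ≤ (1 / (Q:ℝ)) * (NB:ℝ) := by
          exact mul_le_mul_of_nonneg_left hS (by positivity)
      _ = (NB:ℝ) / Q := by ring
  -- upper bound by 1
  have hub1 : ∀ U : Matrix (Fin NA × Fin NB) (Fin NA × Fin NB) ℂ, U * Uᴴ = 1 →
      (1 / (Q:ℝ)) * ∑ b : Fin NB, ∑ i, Complex.normSq (star (Uᴴ *ᵥ χ b) ⬝ᵥ ψ i)
        ≤ 1 := by
    intro U hU
    have hS : ∑ b : Fin NB, ∑ i, Complex.normSq (star (Uᴴ *ᵥ χ b) ⬝ᵥ ψ i) ≤ (Q:ℝ) := by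
      rw [Finset.sum_comm]
      calc ∑ i, ∑ b : Fin NB, Complex.normSq (star (Uᴴ *ᵥ χ b) ⬝ᵥ ψ i)
          ≤ ∑ _i : Fin Q, (1:ℝ) := by
            refine Finset.sum_le_sum fun i _ => ?_
            have hψi : star (ψ i) ⬝ᵥ ψ i = 1 := by rw [horth]; simp
            exact bessel (fun b => Uᴴ *ᵥ χ b) (hworth U hU) (ψ i) hψi
        _ = (Q:ℝ) := by simp
    calc (1 / (Q:ℝ)) * ∑ b : Fin NB, ∑ i, Complex.normSq (star (Uᴴ *ᵥ χ b) ⬝ᵥ ψ i)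
        ≤ (1 / (Q:ℝ)) * (Q:ℝ) := mul_le_mul_of_nonneg_left hS (by positivity)
      _ = 1 := by field_simp
  constructor
  · -- case NB ≤ Q
    intro h
    constructor
    · -- membership: construct the optimal unitary
      obtain ⟨U, hU1, hU2, hUm⟩ := exists_unitary_map (n := Fin NA × Fin NB) (m := NB)
        (by simpa [Fintype.card_prod] using Nat.le_mul_of_pos_left NB (by omega))
        (fun b => ψ (Fin.castLE h b)) χ
        (fun k l => by rw [horth]; simp [Fin.castLE_inj])
        hχorth
      have hw : ∀ b, Uᴴ *ᵥ χ b = ψ (Fin.castLE h b) := by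
        intro b
        rw [← hUm b, mulVec_mulVec, hU2, one_mulVec]
      refine ⟨U, hU1, hU2, ?_⟩
      rw [hval U]
      have hS : ∑ b : Fin NB, ∑ i, Complex.normSq (star (Uᴴ *ᵥ χ b) ⬝ᵥ ψ i) = (NB:ℝ) := by
        have : ∀ b : Fin NB, ∑ i, Complex.normSq (star (Uᴴ *ᵥ χ b) ⬝ᵥ ψ i) = 1 := by
          intro b
          rw [show (∑ i, Complex.normSq (star (Uᴴ *ᵥ χ b) ⬝ᵥ ψ i))
              = ∑ i, Complex.normSq (star (ψ (Fin.castLE h b)) ⬝ᵥ ψ i) from by rw [hw]]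
          simp [horth, apply_ite Complex.normSq, Finset.sum_ite_eq]
        rw [Finset.sum_congr rfl fun b _ => this b]
        simp
      rw [hS]
      field_simp
    · rintro x ⟨U, hU1, hU2, rfl⟩
      rw [hval U]
      exact hubNB U hU1
  · -- case Q ≤ NB
    intro h
    constructor
    · obtain ⟨U, hU1, hU2, hUm⟩ := exists_unitary_map (n := Fin NA × Fin NB) (m := Q)
        (by
          simp only [Fintype.card_prod, Fintype.card_fin]
          calc Q ≤ NB := h
            _ ≤ NA * NB := Nat.le_mul_of_pos_left NB (by omega))
        ψ (fun i => χ (Fin.castLE h i))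
        horth
        (fun k l => by rw [hχorth]; simp [Fin.castLE_inj])
      refine ⟨U, hU1, hU2, ?_⟩
      rw [hval U]
      have hterm : ∀ (b : Fin NB) (i : Fin Q),
          star (Uᴴ *ᵥ χ b) ⬝ᵥ ψ i = if b = Fin.castLE h i then 1 else 0 := by
        intro b i
        rw [adj_dot, hUm i, hχorth]
      have hS : ∑ b : Fin NB, ∑ i, Complex.normSq (star (Uᴴ *ᵥ χ b) ⬝ᵥ ψ i) = (Q:ℝ) := by
        rw [Finset.sum_comm]
        have : ∀ i : Fin Q, ∑ b : Fin NB, Complex.normSq (star (Uᴴ *ᵥ χ b) ⬝ᵥ ψ i) = 1 := by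
          intro i
          rw [Finset.sum_congr rfl fun b _ => by rw [hterm b i]]
          simp [apply_ite Complex.normSq, Finset.sum_ite_eq']
        rw [Finset.sum_congr rfl fun i _ => this i]
        simp
      rw [hS]
      field_simp
    · rintro x ⟨U, hU1, hU2, rfl⟩
      rw [hval U]
      exact hub1 U hU1
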